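/- arXiv:2309.00967 — 3 statements merged into one kernel-verified Lean document; each statement's English description precedes it below -/
import Mathlib

section
/- In the real Okubo algebra 𝒪, the norm is multiplicative: n(x*y) = n(x)·n(y) for all x, y ∈ 𝒪. -/
open Matrix Complex

noncomputable section

/-- `3 × 3` complex matrices. -/
abbrev M3 : Type := Matrix (Fin 3) (Fin 3) ℂ

/-- The real Okubo algebra: `3 × 3` traceless Hermitian complex matrices. -/
def Okubo : Set M3 := {x | x.IsHermitian ∧ x.trace = 0}

/-- The constant `μ = (3 + i√3)/6`. -/
def okMu : ℂ := (3 + (Real.sqrt 3 : ℂ) * Complex.I) / 6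

/-- The Okubo product `x*y = μ·(xy) + μ̄·(yx) − (1/3)Tr(xy)·Id`. -/
def omul (x y : M3) : M3 :=
  okMu • (x * y) + (starRingEnd ℂ) okMu • (y * x) - ((1 / 3 : ℂ) * (x * y).trace) • (1 : M3)

/-- The Okubic norm `n(x) = (1/6)Tr(x²)` (real-valued on Hermitian matrices). -/
def onorm (x : M3) : ℝ := (1 / 6) * ((x * x).trace).re

/-- The polar form `⟨x,y⟩ = n(x+y) − n(x) − n(y)` of the Okubic norm. -/
def opolar (x y : M3) : ℝ := onorm (x + y) - onorm x - onorm y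



lemma sqrt3_sq' : ((Real.sqrt 3 : ℝ) : ℂ)^2 = 3 := by
  norm_cast
  rw [Real.sq_sqrt]; norm_num

lemma mu_conj' : (starRingEnd ℂ) okMu = (3 - (Real.sqrt 3 : ℂ) * Complex.I) / 6 := by
  simp [okMu, map_div₀, map_add, _root_.map_mul, Complex.conj_I, Complex.conj_ofReal,
    map_ofNat]
  ring

lemma mu_add' : okMu + (starRingEnd ℂ) okMu = 1 := by
  rw [mu_conj', okMu]; ring

lemma mu_mul' : okMu * (starRingEnd ℂ) okMu = 1/3 := by
  rw [mu_conj', okMu]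
  linear_combination (-(Complex.I^2)/36) * sqrt3_sq' + (-1/12 : ℂ) * Complex.I_sq

lemma mu_sq' : okMu^2 + ((starRingEnd ℂ) okMu)^2 = 1/3 := by
  rw [mu_conj', okMu]
  linear_combination (Complex.I^2/18) * sqrt3_sq' + (1/6 : ℂ) * Complex.I_sq

lemma trace_omul_sq (x y : M3) (hx : x.trace = 0) (hy : y.trace = 0) :
    ((omul x y) * (omul x y)).trace = (1/6) * (x*x).trace * (y*y).trace := by
  have e1 : (y*x).trace = (x*y).trace := trace_mul_comm y x
  have e2 : ((y*x)*(y*x)).trace = ((x*y)*(x*y)).trace := by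
    simp only [Matrix.trace, Matrix.diag, Matrix.mul_apply, Fin.sum_univ_three]; ring
  have e3 : ((x*y)*(y*x)).trace = ((x*x)*(y*y)).trace := by
    simp only [Matrix.trace, Matrix.diag, Matrix.mul_apply, Fin.sum_univ_three]; ring
  have e4 : ((y*x)*(x*y)).trace = ((x*x)*(y*y)).trace := by
    simp only [Matrix.trace, Matrix.diag, Matrix.mul_apply, Fin.sum_univ_three]; ring
  have key : 2 * ((x*y)*(x*y)).trace + 4 * ((x*x)*(y*y)).trace - 2 * ((x*y).trace)^2
      = (x*x).trace * (y*y).trace := by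
    simp only [Matrix.trace, Matrix.diag, Matrix.mul_apply, Fin.sum_univ_three] at *
    have ex : x 2 2 = -(x 0 0) - x 1 1 := by linear_combination hx
    have ey : y 2 2 = -(y 0 0) - y 1 1 := by linear_combination hy
    rw [ex, ey]; ring
  simp only [omul, sub_mul, mul_sub, add_mul, mul_add, Matrix.smul_mul, Matrix.mul_smul,
    smul_smul, trace_add, trace_sub, trace_smul, Matrix.mul_one, Matrix.one_mul,
    Matrix.trace_one, smul_eq_mul, Fintype.card_fin, e1, e2, e3, e4]
  push_cast
  linear_combination (1/6) * key + ((x*y)*(x*y)).trace * mu_sq'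
    + 2 * ((x*x)*(y*y)).trace * mu_mul' - (2/3) * ((x*y).trace)^2 * mu_add'

lemma trace_sq_im (x : M3) (hx : x.IsHermitian) : ((x*x).trace).im = 0 := by
  have h : (x*x)ᴴ = x*x := by rw [Matrix.conjTranspose_mul, hx]
  have h2 : (starRingEnd ℂ) ((x*x).trace) = (x*x).trace := by
    calc (starRingEnd ℂ) ((x*x).trace) = ((x*x)ᴴ).trace :=
          (Matrix.trace_conjTranspose (x*x)).symm
      _ = (x*x).trace := by rw [h]
  rw [Complex.ext_iff] at h2
  have := h2.2
  simp only [Complex.conj_im] at this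
  linarith

/-- In the real Okubo algebra, the norm is multiplicative:
`n(x*y) = n(x)·n(y)` for all `x, y ∈ 𝒪`. -/
theorem okubo_paper_stmt4 :
    ∀ x ∈ Okubo, ∀ y ∈ Okubo, onorm (omul x y) = onorm x * onorm y := by
  intro x hx y hy
  obtain ⟨hxh, hxt⟩ := hx
  obtain ⟨hyh, hyt⟩ := hy
  have h := trace_omul_sq x y hxt hyt
  have ix := trace_sq_im x hxh
  have iy := trace_sq_im y hyh
  simp only [onorm, h]
  rw [show (1/6 : ℂ) * (x*x).trace * (y*y).trace
      = ((1/6 : ℂ) * (x*x).trace) * (y*y).trace from by ring]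
  rw [Complex.mul_re, Complex.mul_re]
  simp [ix, iy]
  ring

end
end

section
/- In the real Okubo algebra 𝒪, the norm is associative: ⟨x*y, z⟩ = ⟨x, y*z⟩ for all x, y, z ∈ 𝒪. -/
open Matrix Complex

noncomputable section

lemma opolar_eq (a b : M3) : opolar a b = (1 / 6) * (((a * b).trace + (b * a).trace).re) := by
  simp only [opolar, onorm, Matrix.add_mul, Matrix.mul_add, Matrix.trace_add, Complex.add_re]
  ring

/-- In the real Okubo algebra, the norm is associative:
`⟨x*y, z⟩ = ⟨x, y*z⟩` for all `x, y, z ∈ 𝒪`. -/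
theorem okubo_paper_stmt5 :
    ∀ x ∈ Okubo, ∀ y ∈ Okubo, ∀ z ∈ Okubo,
      opolar (omul x y) z = opolar x (omul y z) := by
  intro x hx y hy z hz
  rw [opolar_eq, opolar_eq]
  have key : ((omul x y) * z).trace + (z * (omul x y)).trace
      = (x * (omul y z)).trace + ((omul y z) * x).trace := by
    simp only [omul, Matrix.add_mul, Matrix.mul_add, Matrix.sub_mul, Matrix.mul_sub,
      Matrix.smul_mul, Matrix.mul_smul, Matrix.trace_add, Matrix.trace_sub, Matrix.trace_smul,
      Matrix.one_mul, Matrix.mul_one, smul_eq_mul, hx.2, hz.2, Matrix.trace_one, mul_zero,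
      zero_mul]
    simp only [← mul_assoc]
    rw [Matrix.trace_mul_cycle z x y, Matrix.trace_mul_cycle x z y]
  rw [key]

end
end

section
/- In the real Okubo algebra 𝒪 with idempotent e = diag(2,−1,−1), define x̄ = ⟨x,e⟩·e − x, τ(x) = e*(e*x), τ²(x) = (x*e)*e, and the unitalized product x·y = (e*x)*(y*e). Then for all x, y ∈ 𝒪 one has x*y = τ(x̄)·τ²(ȳ), i.e. x*y = (e*τ(x̄)) * (τ²(ȳ)*e). -/
open Matrix Complex

noncomputable section

/-- The idempotent `e = diag(2, −1, −1)` of the real Okubo algebra. -/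
def eOk : M3 := Matrix.diagonal ![2, -1, -1]

/-- The conjugation `x̄ = ⟨x,e⟩ • e − x`. -/
def okBar (x : M3) : M3 := opolar x eOk • eOk - x

/-- The order-three automorphism `τ(x) = e*(e*x)`. -/
def tauOk (x : M3) : M3 := omul eOk (omul eOk x)

/-- Its square `τ²(x) = (x*e)*e`. -/
def tauOkSq (x : M3) : M3 := omul (omul x eOk) eOk

/-- The unitalized (octonion) product `x·y = (e*x)*(y*e)`. -/
def udot (x y : M3) : M3 := omul (omul eOk x) (omul y eOk)

lemma okMu_conj : (starRingEnd ℂ) okMu = 1 - okMu := by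
  simp only [okMu, map_div₀, map_add, _root_.map_mul, Complex.conj_I, Complex.conj_ofReal,
    map_ofNat]
  ring

lemma okMu_sq : okMu ^ 2 = okMu - 1 / 3 := by
  have hs : ((Real.sqrt 3 : ℝ) : ℂ) ^ 2 = 3 := by
    norm_cast
    rw [Real.sq_sqrt] <;> norm_num
  unfold okMu
  linear_combination (Complex.I ^ 2 / 36) * hs + (1 / 12 : ℂ) * Complex.I_sq

lemma okBar_eq (x : M3) (hx : x ∈ Okubo) : okBar x = x 0 0 • eOk - x := by
  have hxt : x 0 0 + x 1 1 + x 2 2 = 0 := by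
    simpa [Matrix.trace, Fin.sum_univ_three] using hx.2
  have hx00 : (starRingEnd ℂ) (x 0 0) = x 0 0 := by
    have h := congrFun (congrFun hx.1 0) 0
    simpa [Matrix.conjTranspose_apply] using h
  have key : ((x + eOk) * (x + eOk)).trace - (x * x).trace - (eOk * eOk).trace = 6 * x 0 0 := by
    simp [Matrix.trace, Matrix.mul_apply, Fin.sum_univ_three, eOk, Matrix.add_apply,
      Matrix.diagonal]
    linear_combination (-2 : ℂ) * hxt
  have hre : opolar x eOk = (x 0 0).re := by
    have h2 := congrArg Complex.re key
    rw [show ((6 : ℂ) * x 0 0).re = 6 * (x 0 0).re by simp] at h2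
    simp only [Complex.sub_re] at h2
    unfold opolar onorm
    linarith
  have hox : ((opolar x eOk : ℝ) : ℂ) = x 0 0 := by
    rw [hre]
    exact Complex.conj_eq_iff_re.mp hx00
  unfold okBar
  congr 1
  ext i j
  simp [Matrix.smul_apply, Complex.real_smul, smul_eq_mul, hox]

set_option maxRecDepth 200000 in
set_option maxHeartbeats 12000000 in
/-- For all `x, y ∈ 𝒪` one has `x*y = τ(x̄)·τ²(ȳ)`,
i.e. `x*y = (e*τ(x̄)) * (τ²(ȳ)*e)`. -/
theorem okubo_paper_stmt10 :
    ∀ x ∈ Okubo, ∀ y ∈ Okubo,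
      omul x y = udot (tauOk (okBar x)) (tauOkSq (okBar y)) := by
  intro x hx y hy
  have hxt : x 0 0 + x 1 1 + x 2 2 = 0 := by
    simpa [Matrix.trace, Fin.sum_univ_three] using hx.2
  have hyt : y 0 0 + y 1 1 + y 2 2 = 0 := by
    simpa [Matrix.trace, Fin.sum_univ_three] using hy.2
  have hmu2 : okMu ^ 2 = okMu - 1 / 3 := okMu_sq
  rw [okBar_eq x hx, okBar_eq y hy]
  have e00 : omul x y 0 0 =
      udot (tauOk (x 0 0 • eOk - x)) (tauOkSq (y 0 0 • eOk - y)) 0 0 := by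
    unfold udot tauOk tauOkSq omul
    simp only [eOk, Matrix.diagonal, Matrix.trace, Matrix.mul_apply, Fin.sum_univ_three,
      Matrix.add_apply, Matrix.sub_apply, Matrix.smul_apply, Matrix.one_apply, Matrix.of_apply,
      Matrix.cons_val', Matrix.cons_val_zero, Matrix.cons_val_one, Matrix.head_cons,
      Matrix.cons_val_two, Matrix.tail_cons, Matrix.head_fin_const, Matrix.empty_val',
      Matrix.cons_val_fin_one, Fin.isValue, Matrix.diag_apply, smul_eq_mul, okMu_conj,
      Fin.zero_eta, Fin.mk_one, if_true, if_false, Fin.reduceEq, ite_true, ite_false,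
      one_ne_zero, zero_ne_one, reduceIte, mul_one, mul_zero, mul_neg, neg_mul]
    linear_combination ((-126 : ℂ) * x 2 0 * y 0 2 + (-126 : ℂ) * x 1 0 * y 0 1 + (963 : ℂ) * okMu * x 2 0 * y 0 2 + (963 : ℂ) * okMu * x 1 0 * y 0 1 + (-18 : ℂ) * okMu * x 0 2 * y 2 0 + (-18 : ℂ) * okMu * x 0 1 * y 1 0 + (-2781 : ℂ) * okMu^2 * x 2 0 * y 0 2 + (-2781 : ℂ) * okMu^2 * x 1 0 * y 0 1 + (135 : ℂ) * okMu^2 * x 0 2 * y 2 0 + (135 : ℂ) * okMu^2 * x 0 1 * y 1 0 + (3888 : ℂ) * okMu^3 * x 2 0 * y 0 2 + (3888 : ℂ) * okMu^3 * x 1 0 * y 0 1 + (-486 : ℂ) * okMu^3 * x 0 2 * y 2 0 + (-486 : ℂ) * okMu^3 * x 0 1 * y 1 0 + (-2673 : ℂ) * okMu^4 * x 2 0 * y 0 2 + (-2673 : ℂ) * okMu^4 * x 1 0 * y 0 1 + (972 : ℂ) * okMu^4 * x 0 2 * y 2 0 + (972 : ℂ) * okMu^4 * x 0 1 * y 1 0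 + (729 : ℂ) * okMu^5 * x 2 0 * y 0 2 + (729 : ℂ) * okMu^5 * x 1 0 * y 0 1 + (-729 : ℂ) * okMu^5 * x 0 2 * y 2 0 + (-729 : ℂ) * okMu^5 * x 0 1 * y 1 0) * hmu2 + ((-2/9 : ℂ) * y 2 2 + (-2/9 : ℂ) * y 1 1 + (1/9 : ℂ) * y 0 0) * hxt + ((1/3 : ℂ) * x 0 0) * hyt
  have e01 : omul x y 0 1 =
      udot (tauOk (x 0 0 • eOk - x)) (tauOkSq (y 0 0 • eOk - y)) 0 1 := by
    unfold udot tauOk tauOkSq omul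
    simp only [eOk, Matrix.diagonal, Matrix.trace, Matrix.mul_apply, Fin.sum_univ_three,
      Matrix.add_apply, Matrix.sub_apply, Matrix.smul_apply, Matrix.one_apply, Matrix.of_apply,
      Matrix.cons_val', Matrix.cons_val_zero, Matrix.cons_val_one, Matrix.head_cons,
      Matrix.cons_val_two, Matrix.tail_cons, Matrix.head_fin_const, Matrix.empty_val',
      Matrix.cons_val_fin_one, Fin.isValue, Matrix.diag_apply, smul_eq_mul, okMu_conj,
      Fin.zero_eta, Fin.mk_one, if_true, if_false, Fin.reduceEq, ite_true, ite_false,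
      one_ne_zero, zero_ne_one, reduceIte, mul_one, mul_zero, mul_neg, neg_mul]
    linear_combination ((27 : ℂ) * x 2 1 * y 0 2 + (-9 : ℂ) * x 2 2 * y 0 1 + (18 : ℂ) * x 1 1 * y 0 1 + (-9 : ℂ) * x 0 0 * y 0 1 + (-54 : ℂ) * okMu * x 2 1 * y 0 2 + (-9 : ℂ) * okMu * x 0 1 * y 2 2 + (-9 : ℂ) * okMu * x 0 1 * y 1 1 + (18 : ℂ) * okMu * x 0 1 * y 0 0 + (9 : ℂ) * okMu * x 2 2 * y 0 1 + (-45 : ℂ) * okMu * x 1 1 * y 0 1 + (36 : ℂ) * okMu * x 0 0 * y 0 1 + (27 : ℂ) * okMu^2 * x 2 1 * y 0 2 + (27 : ℂ) * okMu^2 * x 0 2 * y 2 1 + (27 : ℂ) * okMu^2 * x 0 1 * y 1 1 + (-27 : ℂ) * okMu^2 * x 0 1 * y 0 0 + (27 : ℂ) * okMu^2 * x 1 1 * y 0 1 + (-27 : ℂ) * okMu^2 * x 0 0 * y 0 1) * hmu2 + ((1/3 : ℂ) * y 0 1) * hxt + ((1/3 : ℂ) * x 0 1) * hyt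
  have e02 : omul x y 0 2 =
      udot (tauOk (x 0 0 • eOk - x)) (tauOkSq (y 0 0 • eOk - y)) 0 2 := by
    unfold udot tauOk tauOkSq omul
    simp only [eOk, Matrix.diagonal, Matrix.trace, Matrix.mul_apply, Fin.sum_univ_three,
      Matrix.add_apply, Matrix.sub_apply, Matrix.smul_apply, Matrix.one_apply, Matrix.of_apply,
      Matrix.cons_val', Matrix.cons_val_zero, Matrix.cons_val_one, Matrix.head_cons,
      Matrix.cons_val_two, Matrix.tail_cons, Matrix.head_fin_const, Matrix.empty_val',
      Matrix.cons_val_fin_one, Fin.isValue, Matrix.diag_apply, smul_eq_mul, okMu_conj,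
      Fin.zero_eta, Fin.mk_one, if_true, if_false, Fin.reduceEq, ite_true, ite_false,
      one_ne_zero, zero_ne_one, reduceIte, mul_one, mul_zero, mul_neg, neg_mul]
    linear_combination ((27 : ℂ) * x 1 2 * y 0 1 + (18 : ℂ) * x 2 2 * y 0 2 + (-9 : ℂ) * x 1 1 * y 0 2 + (-9 : ℂ) * x 0 0 * y 0 2 + (-54 : ℂ) * okMu * x 1 2 * y 0 1 + (-9 : ℂ) * okMu * x 0 2 * y 2 2 + (-9 : ℂ) * okMu * x 0 2 * y 1 1 + (18 : ℂ) * okMu * x 0 2 * y 0 0 + (-45 : ℂ) * okMu * x 2 2 * y 0 2 + (9 : ℂ) * okMu * x 1 1 * y 0 2 + (36 : ℂ) * okMu * x 0 0 * y 0 2 + (27 : ℂ) * okMu^2 * x 1 2 * y 0 1 + (27 : ℂ) * okMu^2 * x 0 2 * y 2 2 + (-27 : ℂ) * okMu^2 * x 0 2 * y 0 0 + (27 : ℂ) * okMu^2 * x 0 1 * y 1 2 + (27 : ℂ) * okMu^2 * x 2 2 * y 0 2 + (-27 : ℂ) * okMu^2 * x 0 0 * y 0 2) * hmu2 + ((1/3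 : ℂ) * y 0 2) * hxt + ((1/3 : ℂ) * x 0 2) * hyt
  have e10 : omul x y 1 0 =
      udot (tauOk (x 0 0 • eOk - x)) (tauOkSq (y 0 0 • eOk - y)) 1 0 := by
    unfold udot tauOk tauOkSq omul
    simp only [eOk, Matrix.diagonal, Matrix.trace, Matrix.mul_apply, Fin.sum_univ_three,
      Matrix.add_apply, Matrix.sub_apply, Matrix.smul_apply, Matrix.one_apply, Matrix.of_apply,
      Matrix.cons_val', Matrix.cons_val_zero, Matrix.cons_val_one, Matrix.head_cons,
      Matrix.cons_val_two, Matrix.tail_cons, Matrix.head_fin_const, Matrix.empty_val',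
      Matrix.cons_val_fin_one, Fin.isValue, Matrix.diag_apply, smul_eq_mul, okMu_conj,
      Fin.zero_eta, Fin.mk_one, if_true, if_false, Fin.reduceEq, ite_true, ite_false,
      one_ne_zero, zero_ne_one, reduceIte, mul_one, mul_zero, mul_neg, neg_mul]
    linear_combination ((27 : ℂ) * x 2 0 * y 1 2 + (-9 : ℂ) * x 1 0 * y 2 2 + (18 : ℂ) * x 1 0 * y 1 1 + (-9 : ℂ) * x 1 0 * y 0 0 + (-54 : ℂ) * okMu * x 2 0 * y 1 2 + (9 : ℂ) * okMu * x 1 0 * y 2 2 + (-45 : ℂ) * okMu * x 1 0 * y 1 1 + (36 : ℂ) * okMu * x 1 0 * y 0 0 + (-9 : ℂ) * okMu * x 2 2 * y 1 0 + (-9 : ℂ) * okMu * x 1 1 * y 1 0 + (18 : ℂ) * okMu * x 0 0 * y 1 0 + (27 : ℂ) * okMu^2 * x 2 0 * y 1 2 + (27 : ℂ) * okMu^2 * x 1 0 * y 1 1 + (-27 : ℂ) * okMu^2 * x 1 0 * y 0 0 + (27 : ℂ) * okMu^2 * x 1 2 * y 2 0 + (27 : ℂ) * okMu^2 * x 1 1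 * y 1 0 + (-27 : ℂ) * okMu^2 * x 0 0 * y 1 0) * hmu2 + ((1/3 : ℂ) * y 1 0) * hxt + ((1/3 : ℂ) * x 1 0) * hyt
  have e11 : omul x y 1 1 =
      udot (tauOk (x 0 0 • eOk - x)) (tauOkSq (y 0 0 • eOk - y)) 1 1 := by
    unfold udot tauOk tauOkSq omul
    simp only [eOk, Matrix.diagonal, Matrix.trace, Matrix.mul_apply, Fin.sum_univ_three,
      Matrix.add_apply, Matrix.sub_apply, Matrix.smul_apply, Matrix.one_apply, Matrix.of_apply,
      Matrix.cons_val', Matrix.cons_val_zero, Matrix.cons_val_one, Matrix.head_cons,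
      Matrix.cons_val_two, Matrix.tail_cons, Matrix.head_fin_const, Matrix.empty_val',
      Matrix.cons_val_fin_one, Fin.isValue, Matrix.diag_apply, smul_eq_mul, okMu_conj,
      Fin.zero_eta, Fin.mk_one, if_true, if_false, Fin.reduceEq, ite_true, ite_false,
      one_ne_zero, zero_ne_one, reduceIte, mul_one, mul_zero, mul_neg, neg_mul]
    linear_combination ((63 : ℂ) * x 2 0 * y 0 2 + (63 : ℂ) * x 1 0 * y 0 1 + (-387 : ℂ) * okMu * x 2 0 * y 0 2 + (-576 : ℂ) * okMu * x 1 0 * y 0 1 + (-18 : ℂ) * okMu * x 0 2 * y 2 0 + (36 : ℂ) * okMu * x 0 1 * y 1 0 + (810 : ℂ) * okMu^2 * x 2 0 * y 0 2 + (1971 : ℂ) * okMu^2 * x 1 0 * y 0 1 + (81 : ℂ) * okMu^2 * x 0 2 * y 2 0 + (-216 : ℂ) * okMu^2 * x 0 1 * y 1 0 + (-729 : ℂ) * okMu^3 * x 2 0 * y 0 2 + (-3159 : ℂ) * okMu^3 * x 1 0 * y 0 1 + (-243 : ℂ) * okMu^3 * x 0 2 * y 2 0 + (729 : ℂ) * okMu^3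 * x 0 1 * y 1 0 + (243 : ℂ) * okMu^4 * x 2 0 * y 0 2 + (2430 : ℂ) * okMu^4 * x 1 0 * y 0 1 + (243 : ℂ) * okMu^4 * x 0 2 * y 2 0 + (-1215 : ℂ) * okMu^4 * x 0 1 * y 1 0 + (-729 : ℂ) * okMu^5 * x 1 0 * y 0 1 + (729 : ℂ) * okMu^5 * x 0 1 * y 1 0) * hmu2 + ((-2/9 : ℂ) * y 2 2 + (1/9 : ℂ) * y 1 1 + (-2/9 : ℂ) * y 0 0) * hxt + ((1/3 : ℂ) * x 1 1) * hyt
  have e12 : omul x y 1 2 =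
      udot (tauOk (x 0 0 • eOk - x)) (tauOkSq (y 0 0 • eOk - y)) 1 2 := by
    unfold udot tauOk tauOkSq omul
    simp only [eOk, Matrix.diagonal, Matrix.trace, Matrix.mul_apply, Fin.sum_univ_three,
      Matrix.add_apply, Matrix.sub_apply, Matrix.smul_apply, Matrix.one_apply, Matrix.of_apply,
      Matrix.cons_val', Matrix.cons_val_zero, Matrix.cons_val_one, Matrix.head_cons,
      Matrix.cons_val_two, Matrix.tail_cons, Matrix.head_fin_const, Matrix.empty_val',
      Matrix.cons_val_fin_one, Fin.isValue, Matrix.diag_apply, smul_eq_mul, okMu_conj,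
      Fin.zero_eta, Fin.mk_one, if_true, if_false, Fin.reduceEq, ite_true, ite_false,
      one_ne_zero, zero_ne_one, reduceIte, mul_one, mul_zero, mul_neg, neg_mul]
    linear_combination ((-189 : ℂ) * okMu * x 1 0 * y 0 2 + (54 : ℂ) * okMu * x 0 2 * y 1 0 + (1161 : ℂ) * okMu^2 * x 1 0 * y 0 2 + (-297 : ℂ) * okMu^2 * x 0 2 * y 1 0 + (-2430 : ℂ) * okMu^3 * x 1 0 * y 0 2 + (972 : ℂ) * okMu^3 * x 0 2 * y 1 0 + (2187 : ℂ) * okMu^4 * x 1 0 * y 0 2 + (-1458 : ℂ) * okMu^4 * x 0 2 * y 1 0 + (-729 : ℂ) * okMu^5 * x 1 0 * y 0 2 + (729 : ℂ) * okMu^5 * x 0 2 * y 1 0) * hmu2 + ((1/3 : ℂ) * y 1 2) * hxt + ((1/3 : ℂ) * x 1 2) * hyt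
  have e20 : omul x y 2 0 =
      udot (tauOk (x 0 0 • eOk - x)) (tauOkSq (y 0 0 • eOk - y)) 2 0 := by
    unfold udot tauOk tauOkSq omul
    simp only [eOk, Matrix.diagonal, Matrix.trace, Matrix.mul_apply, Fin.sum_univ_three,
      Matrix.add_apply, Matrix.sub_apply, Matrix.smul_apply, Matrix.one_apply, Matrix.of_apply,
      Matrix.cons_val', Matrix.cons_val_zero, Matrix.cons_val_one, Matrix.head_cons,
      Matrix.cons_val_two, Matrix.tail_cons, Matrix.head_fin_const, Matrix.empty_val',
      Matrix.cons_val_fin_one, Fin.isValue, Matrix.diag_apply, smul_eq_mul, okMu_conj,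
      Fin.zero_eta, Fin.mk_one, if_true, if_false, Fin.reduceEq, ite_true, ite_false,
      one_ne_zero, zero_ne_one, reduceIte, mul_one, mul_zero, mul_neg, neg_mul]
    linear_combination ((18 : ℂ) * x 2 0 * y 2 2 + (-9 : ℂ) * x 2 0 * y 1 1 + (-9 : ℂ) * x 2 0 * y 0 0 + (27 : ℂ) * x 1 0 * y 2 1 + (-45 : ℂ) * okMu * x 2 0 * y 2 2 + (9 : ℂ) * okMu * x 2 0 * y 1 1 + (36 : ℂ) * okMu * x 2 0 * y 0 0 + (-54 : ℂ) * okMu * x 1 0 * y 2 1 + (-9 : ℂ) * okMu * x 2 2 * y 2 0 + (-9 : ℂ) * okMu * x 1 1 * y 2 0 + (18 : ℂ) * okMu * x 0 0 * y 2 0 + (27 : ℂ) * okMu^2 * x 2 1 * y 1 0 + (27 : ℂ) * okMu^2 * x 2 0 * y 2 2 + (-27 : ℂ) * okMu^2 * x 2 0 * y 0 0 + (27 : ℂ) * okMu^2 * x 1 0 * y 2 1 + (27 : ℂ) * okMu^2 * x 2 2 * y 2 0 + (-27 : ℂ) * okMu^2 * x 0 0 * y 2 0) * hmu2 + ((1/3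 : ℂ) * y 2 0) * hxt + ((1/3 : ℂ) * x 2 0) * hyt
  have e21 : omul x y 2 1 =
      udot (tauOk (x 0 0 • eOk - x)) (tauOkSq (y 0 0 • eOk - y)) 2 1 := by
    unfold udot tauOk tauOkSq omul
    simp only [eOk, Matrix.diagonal, Matrix.trace, Matrix.mul_apply, Fin.sum_univ_three,
      Matrix.add_apply, Matrix.sub_apply, Matrix.smul_apply, Matrix.one_apply, Matrix.of_apply,
      Matrix.cons_val', Matrix.cons_val_zero, Matrix.cons_val_one, Matrix.head_cons,
      Matrix.cons_val_two, Matrix.tail_cons, Matrix.head_fin_const, Matrix.empty_val',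
      Matrix.cons_val_fin_one, Fin.isValue, Matrix.diag_apply, smul_eq_mul, okMu_conj,
      Fin.zero_eta, Fin.mk_one, if_true, if_false, Fin.reduceEq, ite_true, ite_false,
      one_ne_zero, zero_ne_one, reduceIte, mul_one, mul_zero, mul_neg, neg_mul]
    linear_combination ((-189 : ℂ) * okMu * x 2 0 * y 0 1 + (54 : ℂ) * okMu * x 0 1 * y 2 0 + (1161 : ℂ) * okMu^2 * x 2 0 * y 0 1 + (-297 : ℂ) * okMu^2 * x 0 1 * y 2 0 + (-2430 : ℂ) * okMu^3 * x 2 0 * y 0 1 + (972 : ℂ) * okMu^3 * x 0 1 * y 2 0 + (2187 : ℂ) * okMu^4 * x 2 0 * y 0 1 + (-1458 : ℂ) * okMu^4 * x 0 1 * y 2 0 + (-729 : ℂ) * okMu^5 * x 2 0 * y 0 1 + (729 : ℂ) * okMu^5 * x 0 1 * y 2 0) * hmu2 + ((1/3 : ℂ) * y 2 1) * hxt + ((1/3 : ℂ) * x 2 1) * hyt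
  have e22 : omul x y 2 2 =
      udot (tauOk (x 0 0 • eOk - x)) (tauOkSq (y 0 0 • eOk - y)) 2 2 := by
    unfold udot tauOk tauOkSq omul
    simp only [eOk, Matrix.diagonal, Matrix.trace, Matrix.mul_apply, Fin.sum_univ_three,
      Matrix.add_apply, Matrix.sub_apply, Matrix.smul_apply, Matrix.one_apply, Matrix.of_apply,
      Matrix.cons_val', Matrix.cons_val_zero, Matrix.cons_val_one, Matrix.head_cons,
      Matrix.cons_val_two, Matrix.tail_cons, Matrix.head_fin_const, Matrix.empty_val',
      Matrix.cons_val_fin_one, Fin.isValue, Matrix.diag_apply, smul_eq_mul, okMu_conj,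
      Fin.zero_eta, Fin.mk_one, if_true, if_false, Fin.reduceEq, ite_true, ite_false,
      one_ne_zero, zero_ne_one, reduceIte, mul_one, mul_zero, mul_neg, neg_mul]
    linear_combination ((63 : ℂ) * x 2 0 * y 0 2 + (63 : ℂ) * x 1 0 * y 0 1 + (-576 : ℂ) * okMu * x 2 0 * y 0 2 + (-387 : ℂ) * okMu * x 1 0 * y 0 1 + (36 : ℂ) * okMu * x 0 2 * y 2 0 + (-18 : ℂ) * okMu * x 0 1 * y 1 0 + (1971 : ℂ) * okMu^2 * x 2 0 * y 0 2 + (810 : ℂ) * okMu^2 * x 1 0 * y 0 1 + (-216 : ℂ) * okMu^2 * x 0 2 * y 2 0 + (81 : ℂ) * okMu^2 * x 0 1 * y 1 0 + (-3159 : ℂ) * okMu^3 * x 2 0 * y 0 2 + (-729 : ℂ) * okMu^3 * x 1 0 * y 0 1 + (729 : ℂ) * okMu^3 * x 0 2 * y 2 0 + (-243 : ℂ) * okMu^3 * x 0 1 * y 1 0 + (2430 : ℂ) * okMu^4 * x 2 0 * y 0 2 + (243 : ℂ) * okMu^4 * x 1 0 * y 0 1 + (-1215 : ℂ) * okMu^4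 * x 0 2 * y 2 0 + (243 : ℂ) * okMu^4 * x 0 1 * y 1 0 + (-729 : ℂ) * okMu^5 * x 2 0 * y 0 2 + (729 : ℂ) * okMu^5 * x 0 2 * y 2 0) * hmu2 + ((4/9 : ℂ) * y 2 2 + (1/9 : ℂ) * y 1 1 + (1/9 : ℂ) * y 0 0) * hxt + ((-1/3 : ℂ) * x 1 1 + (-1/3 : ℂ) * x 0 0) * hyt
  ext i j
  fin_cases i <;> fin_cases j
  exacts [e00, e01, e02, e10, e11, e12, e20, e21, e22]

end
end
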